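/- Let P be a rational polyhedral cone in R^m with nonempty interior, i.e., P = {x ∈ R^m : A x ≥ 0} for some integer matrix A. Then there exist nonempty finite sets Ω₀ ⊂ int(P) ∩ Z^m and Ω ⊂ P ∩ Z^m such that int(P) ∩ Z^m = { a + Σ_{b∈Ω} k_b·b : a ∈ Ω₀, k_b ∈ Z, k_b ≥ 0 }. -/

import Mathlib

open scoped BigOperators

namespace IntConeAux

abbrev Tup (m K : ℕ) := (Fin m → ℕ) × ((Fin m → ℕ) × (Fin K → ℕ))

lemma tup_pwo (m K : ℕ) : (Set.univ : Set (Tup m K)).IsPWO := by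
  have h1 : (Set.univ : Set (Fin m → ℕ)).IsPWO :=
    Set.isPWO_univ_iff.2 inferInstance
  have h2 : (Set.univ : Set (Fin K → ℕ)).IsPWO :=
    Set.isPWO_univ_iff.2 inferInstance
  have := h1.prod (h1.prod h2)
  simpa [Set.univ_prod_univ] using this

def sdeg {m K : ℕ} (t : Tup m K) : ℕ := (∑ j, t.1 j) + (∑ j, t.2.1 j) + (∑ i, t.2.2 i)

lemma tup_le_iff {m K : ℕ} (s t : Tup m K) :
    s ≤ t ↔ (∀ j, s.1 j ≤ t.1 j) ∧ (∀ j, s.2.1 j ≤ t.2.1 j) ∧ (∀ i, s.2.2 i ≤ t.2.2 i) := by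
  simp [Prod.le_def, Pi.le_def]

lemma sdeg_lt {m K : ℕ} (s t : Tup m K) (hle : s ≤ t) (hne : s ≠ t) : sdeg s < sdeg t := by
  rw [tup_le_iff] at hle
  obtain ⟨h1, h2, h3⟩ := hle
  have e1 : (∑ j, s.1 j) ≤ ∑ j, t.1 j := Finset.sum_le_sum fun j _ => h1 j
  have e2 : (∑ j, s.2.1 j) ≤ ∑ j, t.2.1 j := Finset.sum_le_sum fun j _ => h2 j
  have e3 : (∑ i, s.2.2 i) ≤ ∑ i, t.2.2 i := Finset.sum_le_sum fun i _ => h3 i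
  have key : sdeg s ≠ sdeg t ∨ sdeg s < sdeg t := by
    by_contra hc
    push_neg at hc
    apply hne
    have q1 : (∑ j, s.1 j) = ∑ j, t.1 j := by unfold sdeg at hc; omega
    have q2 : (∑ j, s.2.1 j) = ∑ j, t.2.1 j := by unfold sdeg at hc; omega
    have q3 : (∑ i, s.2.2 i) = ∑ i, t.2.2 i := by unfold sdeg at hc; omega
    have w1 : ∀ j, s.1 j = t.1 j := by
      intro j
      by_contra hj
      have hlt : s.1 j < t.1 j := lt_of_le_of_ne (h1 j) hj
      have := Finset.sum_lt_sum (fun k _ => h1 k) ⟨j, Finset.mem_univ j, hlt⟩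
      omega
    have w2 : ∀ j, s.2.1 j = t.2.1 j := by
      intro j
      by_contra hj
      have hlt : s.2.1 j < t.2.1 j := lt_of_le_of_ne (h2 j) hj
      have := Finset.sum_lt_sum (fun k _ => h2 k) ⟨j, Finset.mem_univ j, hlt⟩
      omega
    have w3 : ∀ i, s.2.2 i = t.2.2 i := by
      intro i
      by_contra hi
      have hlt : s.2.2 i < t.2.2 i := lt_of_le_of_ne (h3 i) hi
      have := Finset.sum_lt_sum (fun k _ => h3 k) ⟨i, Finset.mem_univ i, hlt⟩
      omega
    exact Prod.ext (funext w1) (Prod.ext (funext w2) (funext w3))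
  rcases key with h | h
  · unfold sdeg at h ⊢
    omega
  · exact h

lemma sdeg_eq_zero {m K : ℕ} (t : Tup m K) (h : sdeg t = 0) : t = 0 := by
  unfold sdeg at h
  have h1 : (∑ j, t.1 j) = 0 := by omega
  have h2 : (∑ j, t.2.1 j) = 0 := by omega
  have h3 : (∑ i, t.2.2 i) = 0 := by omega
  rw [Finset.sum_eq_zero_iff] at h1 h2 h3
  refine Prod.ext (funext fun j => h1 j (Finset.mem_univ j))
    (Prod.ext (funext fun j => h2 j (Finset.mem_univ j))
      (funext fun i => h3 i (Finset.mem_univ i)))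

lemma my_dickson {α : Type*} [PartialOrder α] (hPWO : (Set.univ : Set α).IsPWO)
    (deg : α → ℕ) (hdeg : ∀ x y : α, x ≤ y → x ≠ y → deg x < deg y)
    (S : Set α) :
    {x | x ∈ S ∧ ∀ y ∈ S, y ≤ x → y = x}.Finite ∧
    ∀ s ∈ S, ∃ x, (x ∈ S ∧ ∀ y ∈ S, y ≤ x → y = x) ∧ x ≤ s := by
  constructor
  · refine IsAntichain.finite_of_partiallyWellOrderedOn ?_ (hPWO.mono (Set.subset_univ _))
    intro a ha b hb hab hle
    exact hab (hb.2 a ha.1 hle)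
  · intro s hs
    obtain ⟨n, hn⟩ : ∃ n, deg s ≤ n := ⟨deg s, le_rfl⟩
    induction n generalizing s with
    | zero =>
      refine ⟨s, ⟨hs, fun y hy hle => ?_⟩, le_rfl⟩
      by_contra hne
      have := hdeg y s hle hne
      omega
    | succ n ih =>
      by_cases hmin : ∀ y ∈ S, y ≤ s → y = s
      · exact ⟨s, ⟨hs, hmin⟩, le_rfl⟩
      · push_neg at hmin
        obtain ⟨y, hy, hle, hne⟩ := hmin
        have := hdeg y s hle hne
        obtain ⟨x, hx, hxle⟩ := ih y hy (by omega)
        exact ⟨x, hx, hxle.trans hle⟩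

lemma my_interior (m K : ℕ) (A : Matrix (Fin K) (Fin m) ℤ)
    (P : Set (Fin m → ℝ))
    (hP : P = {x : Fin m → ℝ | ∀ i : Fin K, 0 ≤ ∑ j : Fin m, (A i j : ℝ) * x j}) :
    interior P = {x : Fin m → ℝ | ∀ i : Fin K, A i ≠ 0 → 0 < ∑ j : Fin m, (A i j : ℝ) * x j} := by
  apply le_antisymm
  · intro x hx
    intro i hi
    have hxP : x ∈ P := interior_subset hx
    rw [hP] at hxP
    have h0 : 0 ≤ ∑ j : Fin m, (A i j : ℝ) * x j := hxP i
    rcases h0.lt_or_eq with h | h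
    · exact h
    · exfalso
      obtain ⟨ε, hε, hball⟩ := Metric.isOpen_iff.1 isOpen_interior x hx
      set u : Fin m → ℝ := fun j => (A i j : ℝ) with hu
      have hN : 0 < ∑ j : Fin m, u j * u j := by
        obtain ⟨j0, hj0⟩ : ∃ j0, A i j0 ≠ 0 := by
          by_contra hc
          push_neg at hc
          exact hi (funext hc)
        apply Finset.sum_pos' (fun j _ => mul_self_nonneg _)
        refine ⟨j0, Finset.mem_univ _, ?_⟩
        have : (A i j0 : ℝ) ≠ 0 := Int.cast_ne_zero.2 hj0
        exact mul_self_pos.2 this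
      set C : ℝ := (∑ j : Fin m, |u j|) + 1 with hC
      have hCpos : 0 < C := by
        have : 0 ≤ ∑ j : Fin m, |u j| := Finset.sum_nonneg fun j _ => abs_nonneg _
        linarith
      set δ : ℝ := ε / (2 * C) with hδ
      have hδpos : 0 < δ := by positivity
      set y : Fin m → ℝ := x - δ • u with hy
      have hymem : y ∈ Metric.ball x ε := by
        rw [Metric.mem_ball, dist_eq_norm]
        have e : y - x = -(δ • u) := by rw [hy]; abel
        rw [e, norm_neg, norm_smul]
        have hnu : ‖u‖ ≤ C := by
          apply pi_norm_le_iff_of_nonneg hCpos.le |>.2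
          intro j
          have h1 : |u j| ≤ ∑ k : Fin m, |u k| :=
            Finset.single_le_sum (fun k _ => abs_nonneg (u k)) (Finset.mem_univ j)
          rw [Real.norm_eq_abs]
          linarith
        have hδn : ‖δ‖ = δ := by rw [Real.norm_eq_abs, abs_of_pos hδpos]
        rw [hδn]
        calc δ * ‖u‖ ≤ δ * C := by nlinarith
          _ = ε / 2 := by rw [hδ]; field_simp
          _ < ε := by linarith
      have hyP : y ∈ P := interior_subset (hball hymem)
      rw [hP] at hyP
      have hyc := hyP i
      have hcomp : ∑ j : Fin m, (A i j : ℝ) * y j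
          = (∑ j : Fin m, (A i j : ℝ) * x j) - δ * ∑ j : Fin m, u j * u j := by
        rw [hy]
        simp only [Pi.sub_apply, Pi.smul_apply, smul_eq_mul]
        rw [Finset.mul_sum, ← Finset.sum_sub_distrib]
        apply Finset.sum_congr rfl
        intro j _
        ring
      rw [hcomp, ← h] at hyc
      nlinarith
  · apply interior_maximal
    · intro x hx
      rw [hP]
      intro i
      by_cases hi : A i = 0
      · have hz : ∀ j, (A i j : ℝ) = 0 := by
          intro j
          rw [hi]
          simp
        simp [hz]
      · exact (hx i hi).le
    · have e : {x : Fin m → ℝ | ∀ i : Fin K, A i ≠ 0 → 0 < ∑ j : Fin m, (A i j : ℝ) * x j}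
          = ⋂ i : Fin K, {x : Fin m → ℝ | A i ≠ 0 → 0 < ∑ j : Fin m, (A i j : ℝ) * x j} := by
        ext x
        simp
      rw [e]
      apply isOpen_iInter_of_finite
      intro i
      by_cases hi : A i = 0
      · simp [hi]
      · have e2 : {x : Fin m → ℝ | A i ≠ 0 → 0 < ∑ j : Fin m, (A i j : ℝ) * x j}
            = {x : Fin m → ℝ | 0 < ∑ j : Fin m, (A i j : ℝ) * x j} := by
          ext x
          simp [hi]
        rw [e2]
        apply isOpen_lt continuous_const
        exact continuous_finset_sum _ fun j _ => (continuous_const.mul (continuous_apply j))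

lemma my_intpoint (m K : ℕ) (A : Matrix (Fin K) (Fin m) ℤ)
    (x : Fin m → ℝ) (hx : ∀ i : Fin K, A i ≠ 0 → 0 < ∑ j : Fin m, (A i j : ℝ) * x j) :
    ∃ v : Fin m → ℤ, ∀ i : Fin K, A i ≠ 0 → 0 < ∑ j : Fin m, A i j * v j := by
  classical
  set Rf : Finset (Fin K) := Finset.univ.filter (fun i => A i ≠ 0) with hRf
  rcases Rf.eq_empty_or_nonempty with hE | hne
  · refine ⟨0, fun i hi => absurd ?_ (Finset.eq_empty_iff_forall_notMem.1 hE i)⟩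
    simp [hRf, hi]
  · set ε : ℝ := Rf.inf' hne (fun i => ∑ j : Fin m, (A i j : ℝ) * x j) with hε
    have hεpos : 0 < ε := by
      rw [hε, Finset.lt_inf'_iff]
      intro i hi
      exact hx i (by simpa [hRf] using hi)
    set Csum : ℝ := ∑ i : Fin K, ∑ j : Fin m, |(A i j : ℝ)| with hCsum
    have hCnn : 0 ≤ Csum :=
      Finset.sum_nonneg fun i _ => Finset.sum_nonneg fun j _ => abs_nonneg _
    set δ : ℝ := ε / (Csum + 1) with hδ
    have hδpos : 0 < δ := by positivity
    have hq : ∀ j : Fin m, ∃ q : ℚ, |x j - q| < δ := fun j => exists_rat_near (x j) hδpos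
    choose q hq using hq
    set D : ℕ := ∏ j : Fin m, (q j).den with hD
    have hDpos : 0 < D := Finset.prod_pos fun j _ => (q j).pos
    set v : Fin m → ℤ := fun j => (q j).num * ((D : ℤ) / ((q j).den : ℤ)) with hv
    have hcast : ∀ j, (v j : ℚ) = q j * D := by
      intro j
      have hdvd : ((q j).den : ℤ) ∣ (D : ℤ) :=
        Int.natCast_dvd_natCast.2 (Finset.dvd_prod_of_mem _ (Finset.mem_univ j))
      have he : ((q j).den : ℤ) * ((D : ℤ) / ((q j).den : ℤ)) = (D : ℤ) :=
        Int.mul_ediv_cancel' hdvd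
      have h2 : ((q j) * (q j).den : ℚ) = (q j).num := Rat.mul_den_eq_num _
      calc (v j : ℚ) = ((q j).num : ℚ) * (((D : ℤ) / ((q j).den : ℤ) : ℤ) : ℚ) := by
            rw [hv]; push_cast; ring
        _ = (q j * (q j).den) * (((D : ℤ) / ((q j).den : ℤ) : ℤ) : ℚ) := by rw [h2]
        _ = q j * ((((q j).den : ℤ) * ((D : ℤ) / ((q j).den : ℤ)) : ℤ) : ℚ) := by
            push_cast; ring
        _ = q j * D := by rw [he]; push_cast; ring
    refine ⟨v, fun i hi => ?_⟩
    have hiR : i ∈ Rf := by simp [hRf, hi]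
    have hyb : |(∑ j : Fin m, (A i j : ℝ) * x j) - ∑ j : Fin m, (A i j : ℝ) * (q j : ℝ)| < ε := by
      rw [← Finset.sum_sub_distrib]
      have e1 : ∀ j ∈ Finset.univ, (A i j : ℝ) * x j - (A i j : ℝ) * (q j : ℝ)
          = (A i j : ℝ) * (x j - (q j : ℝ)) := by intro j _; ring
      rw [Finset.sum_congr rfl e1]
      calc |∑ j : Fin m, (A i j : ℝ) * (x j - (q j : ℝ))|
          ≤ ∑ j : Fin m, |(A i j : ℝ) * (x j - (q j : ℝ))| := Finset.abs_sum_le_sum_abs _ _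
        _ = ∑ j : Fin m, |(A i j : ℝ)| * |x j - (q j : ℝ)| := by
            apply Finset.sum_congr rfl; intro j _; rw [abs_mul]
        _ ≤ ∑ j : Fin m, |(A i j : ℝ)| * δ := by
            apply Finset.sum_le_sum
            intro j _
            exact mul_le_mul_of_nonneg_left (hq j).le (abs_nonneg _)
        _ = (∑ j : Fin m, |(A i j : ℝ)|) * δ := by rw [Finset.sum_mul]
        _ ≤ Csum * δ := by
            apply mul_le_mul_of_nonneg_right _ hδpos.le
            exact Finset.single_le_sum
              (f := fun i => ∑ j : Fin m, |(A i j : ℝ)|)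
              (fun k _ => Finset.sum_nonneg fun j _ => abs_nonneg _) (Finset.mem_univ i)
        _ < (Csum + 1) * δ := by nlinarith
        _ = ε := by rw [hδ]; field_simp
    have hεle : ε ≤ ∑ j : Fin m, (A i j : ℝ) * x j := Finset.inf'_le _ hiR
    have hy : 0 < ∑ j : Fin m, (A i j : ℝ) * (q j : ℝ) := by
      have := abs_lt.1 hyb
      linarith [this.2]
    have hvr : ∀ j, (v j : ℝ) = (q j : ℝ) * (D : ℝ) := by
      intro j
      have h3 : ((v j : ℚ) : ℝ) = ((q j * D : ℚ) : ℝ) := by rw [hcast j]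
      push_cast at h3
      linarith
    have hfinal : 0 < ∑ j : Fin m, (A i j : ℝ) * (v j : ℝ) := by
      have e : ∑ j : Fin m, (A i j : ℝ) * (v j : ℝ)
          = (D : ℝ) * ∑ j : Fin m, (A i j : ℝ) * (q j : ℝ) := by
        rw [Finset.mul_sum]
        apply Finset.sum_congr rfl
        intro j _
        rw [hvr j]
        ring
      rw [e]
      have : (0:ℝ) < D := by exact_mod_cast hDpos
      positivity
    have : (0:ℝ) < ((∑ j : Fin m, A i j * v j : ℤ) : ℝ) := by push_cast; exact hfinal
    exact_mod_cast this

end IntConeAux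

open IntConeAux in
/-- For a rational polyhedral cone `P = {x : ℝ^m | A x ≥ 0}` with nonempty interior,
there are nonempty finite sets `Ω₀ ⊆ int(P) ∩ ℤ^m` and `Ω ⊆ P ∩ ℤ^m` such that the
lattice points of `int(P)` are exactly the points `a + ∑_{b ∈ Ω} k_b • b` with
`a ∈ Ω₀` and `k_b ∈ ℤ≥0`. -/
theorem interior_lattice_points_of_rational_cone
    (m K : ℕ) (A : Matrix (Fin K) (Fin m) ℤ)
    (P : Set (Fin m → ℝ))
    (hP : P = {x : Fin m → ℝ | ∀ i : Fin K, 0 ≤ ∑ j : Fin m, (A i j : ℝ) * x j})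
    (hint : (interior P).Nonempty) :
    ∃ (Ω₀ Ω : Finset (Fin m → ℤ)),
      Ω₀.Nonempty ∧ Ω.Nonempty ∧
      (∀ a ∈ Ω₀, (fun j => (a j : ℝ)) ∈ interior P) ∧
      (∀ b ∈ Ω, (fun j => (b j : ℝ)) ∈ P) ∧
      (∀ v : Fin m → ℤ,
        (fun j => (v j : ℝ)) ∈ interior P ↔
          ∃ a ∈ Ω₀, ∃ c : (Fin m → ℤ) → ℕ, v = a + ∑ b ∈ Ω, c b • b) := by
  classical
  set L : Fin K → (Fin m → ℤ) → ℤ := fun i v => ∑ j : Fin m, A i j * v j with hL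
  -- characterizations of membership for lattice points
  have hPChar : ∀ v : Fin m → ℤ, ((fun j => (v j : ℝ)) ∈ P ↔ ∀ i, 0 ≤ L i v) := by
    intro v
    rw [hP]
    simp only [Set.mem_setOf_eq, hL]
    constructor
    · intro h i
      have := h i
      have hcast : ((∑ j : Fin m, A i j * v j : ℤ) : ℝ)
          = ∑ j : Fin m, (A i j : ℝ) * (v j : ℝ) := by push_cast; ring_nf
      have : (0:ℝ) ≤ ((∑ j : Fin m, A i j * v j : ℤ) : ℝ) := by rw [hcast]; exact this
      exact_mod_cast this
    · intro h i
      have := h i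
      have hcast : ((∑ j : Fin m, A i j * v j : ℤ) : ℝ)
          = ∑ j : Fin m, (A i j : ℝ) * (v j : ℝ) := by push_cast; ring_nf
      have h2 : (0:ℝ) ≤ ((∑ j : Fin m, A i j * v j : ℤ) : ℝ) := by exact_mod_cast this
      rw [hcast] at h2
      exact h2
  have hIChar : ∀ v : Fin m → ℤ,
      ((fun j => (v j : ℝ)) ∈ interior P ↔ ∀ i, A i ≠ 0 → 1 ≤ L i v) := by
    intro v
    rw [my_interior m K A P hP]
    simp only [Set.mem_setOf_eq, hL]
    constructor
    · intro h i hi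
      have := h i hi
      have hcast : ((∑ j : Fin m, A i j * v j : ℤ) : ℝ)
          = ∑ j : Fin m, (A i j : ℝ) * (v j : ℝ) := by push_cast; ring_nf
      have h2 : (0:ℝ) < ((∑ j : Fin m, A i j * v j : ℤ) : ℝ) := by rw [hcast]; exact this
      have : 0 < ∑ j : Fin m, A i j * v j := by exact_mod_cast h2
      omega
    · intro h i hi
      have := h i hi
      have h2 : (0:ℝ) < ((∑ j : Fin m, A i j * v j : ℤ) : ℝ) := by exact_mod_cast this
      have hcast : ((∑ j : Fin m, A i j * v j : ℤ) : ℝ)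
          = ∑ j : Fin m, (A i j : ℝ) * (v j : ℝ) := by push_cast; ring_nf
      rw [hcast] at h2
      exact h2
  have hLzero : ∀ i, A i = 0 → ∀ v, L i v = 0 := by
    intro i hi v
    rw [hL]
    apply Finset.sum_eq_zero
    intro j _
    have : A i j = 0 := by rw [hi]; rfl
    rw [this, zero_mul]
  -- the projection and the sets T, T'
  set π : Tup m K → (Fin m → ℤ) := fun t j => (t.1 j : ℤ) - (t.2.1 j : ℤ) with hπ
  set T : Set (Tup m K) := {t | ∀ i, L i (π t) = (t.2.2 i : ℤ)} with hT
  set T' : Set (Tup m K) := {t | t ∈ T ∧ ∀ i, A i ≠ 0 → 1 ≤ t.2.2 i} with hT'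
  -- basic linearity facts
  have hLadd : ∀ i (v w : Fin m → ℤ), L i (v + w) = L i v + L i w := by
    intro i v w
    simp only [hL, Pi.add_apply, mul_add]
    rw [Finset.sum_add_distrib]
  have hπ_sub : ∀ g t : Tup m K, g ≤ t → π (t - g) = π t - π g := by
    intro g t hle
    rw [tup_le_iff] at hle
    funext j
    simp only [hπ, Pi.sub_apply, Prod.fst_sub, Prod.snd_sub]
    have h1 := hle.1 j
    have h2 := hle.2.1 j
    push_cast [Nat.cast_sub h1, Nat.cast_sub h2]
    ring
  have hLsub : ∀ i (v w : Fin m → ℤ), L i (v - w) = L i v - L i w := by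
    intro i v w
    simp only [hL, Pi.sub_apply, mul_sub]
    rw [Finset.sum_sub_distrib]
  have hT_sub : ∀ g t : Tup m K, g ∈ T → t ∈ T → g ≤ t → (t - g) ∈ T := by
    intro g t hg ht hle
    intro i
    rw [hπ_sub g t hle, hLsub, hg i, ht i]
    have h3 := (tup_le_iff g t).1 hle |>.2.2 i
    have : (t - g).2.2 i = t.2.2 i - g.2.2 i := rfl
    rw [this]
    push_cast [Nat.cast_sub h3]
    ring
  have h_sub_le : ∀ g t : Tup m K, (t - g) ≤ t := by
    intro g t
    rw [tup_le_iff]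
    exact ⟨fun j => Nat.sub_le _ _, fun j => Nat.sub_le _ _, fun i => Nat.sub_le _ _⟩
  have h_sub_ne : ∀ g t : Tup m K, g ≤ t → g ≠ 0 → (t - g) ≠ t := by
    intro g t hle hg0 hc
    apply hg0
    rw [tup_le_iff] at hle
    have e1 : ∀ j, t.1 j - g.1 j = t.1 j := fun j => congrFun (congrArg Prod.fst hc) j
    have e2 : ∀ j, t.2.1 j - g.2.1 j = t.2.1 j := fun j =>
      congrFun (congrArg (fun s => s.2.1) hc) j
    have e3 : ∀ i, t.2.2 i - g.2.2 i = t.2.2 i := fun i =>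
      congrFun (congrArg (fun s => s.2.2) hc) i
    refine Prod.ext (funext fun j => ?_) (Prod.ext (funext fun j => ?_) (funext fun i => ?_))
    · show g.1 j = 0
      have := hle.1 j; have := e1 j; omega
    · show g.2.1 j = 0
      have := hle.2.1 j; have := e2 j; omega
    · show g.2.2 i = 0
      have := hle.2.2 i; have := e3 i; omega
  -- Dickson applied to the two sets
  obtain ⟨hGfin, hGcov⟩ := my_dickson (tup_pwo m K) sdeg sdeg_lt {t | t ∈ T ∧ t ≠ 0}
  obtain ⟨hMfin, hMcov⟩ := my_dickson (tup_pwo m K) sdeg sdeg_lt T'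
  set ΩG : Finset (Fin m → ℤ) := hGfin.toFinset.image π with hΩG
  set Ω : Finset (Fin m → ℤ) := insert 0 ΩG with hΩ
  set Ω₀ : Finset (Fin m → ℤ) := hMfin.toFinset.image π with hΩ₀
  -- the sum over Ω ignores the inserted 0
  have hΩsum : ∀ c : (Fin m → ℤ) → ℕ, ∑ b ∈ Ω, c b • b = ∑ b ∈ ΩG, c b • b := by
    intro c
    by_cases h0 : (0 : Fin m → ℤ) ∈ ΩG
    · rw [hΩ, Finset.insert_eq_self.2 h0]
    · rw [hΩ, Finset.sum_insert h0, smul_zero, zero_add]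
  -- generation: every element of T maps to an ℕ-combination of ΩG
  have hgen : ∀ n, ∀ t ∈ T, sdeg t ≤ n → ∃ c : (Fin m → ℤ) → ℕ, π t = ∑ b ∈ ΩG, c b • b := by
    intro n
    induction n with
    | zero =>
      intro t ht hdeg
      have ht0 : t = 0 := sdeg_eq_zero t (Nat.le_zero.1 hdeg)
      refine ⟨fun _ => 0, ?_⟩
      rw [ht0]
      have : π 0 = 0 := by funext j; simp [hπ]
      rw [this]
      symm
      apply Finset.sum_eq_zero
      intro b _
      simp
    | succ n ih =>
      intro t ht hdeg
      by_cases ht0 : t = 0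
      · refine ⟨fun _ => 0, ?_⟩
        rw [ht0]
        have : π 0 = 0 := by funext j; simp [hπ]
        rw [this]
        symm
        apply Finset.sum_eq_zero
        intro b _
        simp
      · obtain ⟨g, hgmem, hgle⟩ := hGcov t ⟨ht, ht0⟩
        have hgT : g ∈ T := hgmem.1.1
        have hg0 : g ≠ 0 := hgmem.1.2
        have hrT : (t - g) ∈ T := hT_sub g t hgT ht hgle
        have hrlt : sdeg (t - g) < sdeg t :=
          sdeg_lt _ _ (h_sub_le g t) (h_sub_ne g t hgle hg0)
        obtain ⟨c, hc⟩ := ih (t - g) hrT (by omega)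
        refine ⟨fun b => c b + (if b = π g then 1 else 0), ?_⟩
        have hπgmem : π g ∈ ΩG := by
          rw [hΩG]
          exact Finset.mem_image_of_mem π (hGfin.mem_toFinset.2 hgmem)
        have hsplit : π t = π g + π (t - g) := by
          rw [hπ_sub g t hgle]
          abel
        have hdist : ∑ b ∈ ΩG, (c b + if b = π g then 1 else 0) • b
            = (∑ b ∈ ΩG, c b • b) + ∑ b ∈ ΩG, (if b = π g then 1 else 0) • b := by
          rw [← Finset.sum_add_distrib]
          apply Finset.sum_congr rfl
          intro b _
          rw [add_smul]
        have hind : ∑ b ∈ ΩG, (if b = π g then 1 else 0) • b = π g := by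
          have e : ∀ b ∈ ΩG, (if b = π g then 1 else 0) • b
              = if b = π g then b else 0 := by
            intro b _
            split <;> simp
          rw [Finset.sum_congr rfl e, Finset.sum_ite_eq' ΩG (π g) (fun b => b),
            if_pos hπgmem]
        rw [hsplit, hc, hdist, hind]
        abel
  -- every element of Ω maps into P
  have hGmemT : ∀ b ∈ ΩG, ∃ g ∈ T, π g = b := by
    intro b hb
    rw [hΩG] at hb
    obtain ⟨g, hg, rfl⟩ := Finset.mem_image.1 hb
    exact ⟨g, (hGfin.mem_toFinset.1 hg).1.1, rfl⟩
  have hΩP : ∀ b ∈ Ω, ∀ i, 0 ≤ L i b := by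
    intro b hb i
    rw [hΩ, Finset.mem_insert] at hb
    rcases hb with rfl | hb
    · have : L i 0 = 0 := by simp [hL]
      omega
    · obtain ⟨g, hgT, rfl⟩ := hGmemT b hb
      rw [hgT i]
      positivity
  -- membership data for Ω₀
  have hΩ₀mem : ∀ a ∈ Ω₀, ∃ s ∈ T', π s = a := by
    intro a ha
    rw [hΩ₀] at ha
    obtain ⟨s, hs, rfl⟩ := Finset.mem_image.1 ha
    exact ⟨s, (hMfin.mem_toFinset.1 hs).1, rfl⟩
  have hΩ₀int : ∀ a ∈ Ω₀, ∀ i, A i ≠ 0 → 1 ≤ L i a := by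
    intro a ha i hi
    obtain ⟨s, hsT', rfl⟩ := hΩ₀mem a ha
    rw [hsT'.1 i]
    exact_mod_cast hsT'.2 i hi
  -- a tuple from an interior lattice point
  have htOf : ∀ v : Fin m → ℤ, (∀ i, 0 ≤ L i v) →
      ∃ t ∈ T, π t = v ∧ ∀ i, (t.2.2 i : ℤ) = L i v := by
    intro v hv
    refine ⟨(fun j => (v j).toNat, fun j => (-(v j)).toNat, fun i => (L i v).toNat), ?_, ?_, ?_⟩
    · intro i
      have hπt : π (fun j => (v j).toNat, fun j => (-(v j)).toNat, fun i => (L i v).toNat)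
          = v := by
        funext j
        simp only [hπ]
        omega
      rw [hπt]
      have := hv i
      simp only
      omega
    · funext j
      simp only [hπ]
      omega
    · intro i
      have := hv i
      simp only
      omega
  -- T' is nonempty
  obtain ⟨x, hx⟩ := hint
  have hxint : ∀ i : Fin K, A i ≠ 0 → 0 < ∑ j : Fin m, (A i j : ℝ) * x j := by
    have := (my_interior m K A P hP) ▸ hx
    exact this
  obtain ⟨v₀, hv₀⟩ := my_intpoint m K A x hxint
  have hv₀I : ∀ i, A i ≠ 0 → 1 ≤ L i v₀ := by
    intro i hi
    have h1 := hv₀ i hi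
    have h2 : L i v₀ = ∑ j : Fin m, A i j * v₀ j := rfl
    omega
  have hv₀P : ∀ i, 0 ≤ L i v₀ := by
    intro i
    by_cases hi : A i = 0
    · rw [hLzero i hi]
    · exact le_trans (by norm_num) (hv₀I i hi)
  obtain ⟨t₀, ht₀T, ht₀π, ht₀c⟩ := htOf v₀ hv₀P
  have ht₀T' : t₀ ∈ T' := by
    refine ⟨ht₀T, fun i hi => ?_⟩
    have h1 := hv₀I i hi
    have h2 := ht₀c i
    omega
  have hΩ₀ne : Ω₀.Nonempty := by
    obtain ⟨a', ha', _⟩ := hMcov t₀ ht₀T'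
    exact ⟨π a', Finset.mem_image_of_mem π (hMfin.mem_toFinset.2 ha')⟩
  refine ⟨Ω₀, Ω, hΩ₀ne, ⟨0, Finset.mem_insert_self 0 ΩG⟩, ?_, ?_, ?_⟩
  · intro a ha
    exact (hIChar a).2 (hΩ₀int a ha)
  · intro b hb
    exact (hPChar b).2 (hΩP b hb)
  · intro v
    rw [hIChar v]
    constructor
    · intro hv
      have hvP : ∀ i, 0 ≤ L i v := by
        intro i
        by_cases hi : A i = 0
        · rw [hLzero i hi]
        · exact le_trans (by norm_num) (hv i hi)
      obtain ⟨t, htT, htπ, htc⟩ := htOf v hvP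
      have htT' : t ∈ T' := by
        refine ⟨htT, fun i hi => ?_⟩
        have h1 := hv i hi
        have h2 := htc i
        omega
      obtain ⟨a', ha'min, ha'le⟩ := hMcov t htT'
      have ha'T : a' ∈ T := ha'min.1.1
      have hrT : (t - a') ∈ T := hT_sub a' t ha'T htT ha'le
      obtain ⟨c, hc⟩ := hgen (sdeg (t - a')) (t - a') hrT le_rfl
      refine ⟨π a', Finset.mem_image_of_mem π (hMfin.mem_toFinset.2 ha'min), c, ?_⟩
      rw [hΩsum c, ← hc]
      have hsplit : π t = π a' + π (t - a') := by
        rw [hπ_sub a' t ha'le]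
        abel
      rw [← htπ, hsplit]
    · rintro ⟨a, ha, c, rfl⟩
      intro i hi
      have hLa : 1 ≤ L i a := hΩ₀int a ha i hi
      have hLsmul : ∀ (k : Fin K) (n : ℕ) (w : Fin m → ℤ),
          L k (n • w) = (n : ℤ) * L k w := by
        intro k n w
        simp only [hL, Pi.smul_apply, smul_eq_mul, Finset.mul_sum]
        apply Finset.sum_congr rfl
        intro j _
        ring
      have hLsum : ∀ (k : Fin K) (s : Finset (Fin m → ℤ)),
          L k (∑ b ∈ s, c b • b) = ∑ b ∈ s, (c b : ℤ) * L k b := by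
        intro k s
        induction s using Finset.induction_on with
        | empty => simp [hL]
        | insert b s hnot ih =>
          rw [Finset.sum_insert hnot, hLadd, hLsmul, Finset.sum_insert hnot, ih]
      have hLs : 0 ≤ L i (∑ b ∈ Ω, c b • b) := by
        rw [hLsum i Ω]
        apply Finset.sum_nonneg
        intro b hb
        have h1 := hΩP b hb i
        positivity
      rw [hLadd i a _]
      omega
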